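/- Let C_1, C_2 be nonempty closed convex subsets of a Hilbert space with projections P_1, P_2, let z be a minimizer of d_{C_1}² + d_{C_2}², and set a = P_1 z, b = P_2 z. Then z = (a+b)/2, and for every ε ∈ (0,1) the point z^ε = ((1−ε)a + b)/(2−ε) is a fixed point of R^ε = (Id+ε(P_2−Id))∘(Id+ε(P_1−Id)), with ‖z − z^ε‖ = ε‖b − a‖/(2(2−ε)) → 0 as ε → 0. -/

import Mathlib

open Filter Topology

lemma aux_proj_unique {H : Type*} [NormedAddCommGroup H] [InnerProductSpace ℝ H]
    {C : Set H} (hv : Convex ℝ C) {P : H → H}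
    (hP : ∀ x, P x ∈ C ∧ ∀ y ∈ C, ‖x - P x‖ ≤ ‖x - y‖) (x a : H) (ha : a ∈ C)
    (hinner : ∀ c ∈ C, inner ℝ (x - a) (c - a) ≤ (0:ℝ)) : P x = a := by
  have hmin : ∀ c ∈ C, ‖x - a‖ ≤ ‖x - c‖ := by
    intro c hc
    have h := hinner c hc
    have hsq := norm_sub_sq_real (x - a) (c - a)
    have hxc : x - c = (x - a) - (c - a) := by abel
    rw [← hxc] at hsq
    nlinarith [norm_nonneg (x - c), norm_nonneg (x - a), norm_nonneg (c - a)]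
  set p := P x with hp
  have hpC : p ∈ C := (hP x).1
  have hple : ‖x - p‖ ≤ ‖x - a‖ := (hP x).2 a ha
  have hage : ‖x - a‖ ≤ ‖x - p‖ := hmin p hpC
  have hd : ‖x - p‖ = ‖x - a‖ := le_antisymm hple hage
  have hmC : (2:ℝ)⁻¹ • a + (2:ℝ)⁻¹ • p ∈ C := by
    apply hv ha hpC (by norm_num) (by norm_num) (by norm_num)
  have hdm := hmin _ hmC
  have hxm : x - ((2:ℝ)⁻¹ • a + (2:ℝ)⁻¹ • p) = (2:ℝ)⁻¹ • ((x - a) + (x - p)) := by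
    module
  rw [hxm, norm_smul] at hdm
  have h1 : ‖(2:ℝ)⁻¹‖ = (2:ℝ)⁻¹ := by
    rw [Real.norm_eq_abs, abs_of_pos]; norm_num
  rw [h1] at hdm
  have hpar := parallelogram_law_with_norm ℝ (x - a) (x - p)
  have hsub : (x - a) - (x - p) = p - a := by abel
  rw [hsub] at hpar
  have hle : ‖p - a‖ ≤ 0 := by
    nlinarith [norm_nonneg (p - a), norm_nonneg ((x - a) + (x - p)), norm_nonneg (x - a)]
  have h0 : ‖p - a‖ = 0 := le_antisymm hle (norm_nonneg _)
  have := norm_eq_zero.mp h0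
  rwa [sub_eq_zero] at this

lemma aux_proj_inner {H : Type*} [NormedAddCommGroup H] [InnerProductSpace ℝ H]
    {C : Set H} (hv : Convex ℝ C) {P : H → H}
    (hP : ∀ x, P x ∈ C ∧ ∀ y ∈ C, ‖x - P x‖ ≤ ‖x - y‖) (x : H) :
    ∀ c ∈ C, inner ℝ (x - P x) (c - P x) ≤ (0:ℝ) := by
  haveI : Nonempty C := ⟨⟨P x, (hP x).1⟩⟩
  have key : ‖x - P x‖ = ⨅ w : C, ‖x - w‖ := by
    apply le_antisymm
    · exact le_ciInf fun w => (hP x).2 w w.2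
    · have hbdd : BddBelow (Set.range fun w : C => ‖x - ↑w‖) := by
        refine ⟨0, ?_⟩
        rintro r ⟨w, rfl⟩
        exact norm_nonneg _
      exact ciInf_le hbdd ⟨P x, (hP x).1⟩
  exact (norm_eq_iInf_iff_real_inner_le_zero hv (hP x).1).mp key

lemma aux_infDist_eq {H : Type*} [NormedAddCommGroup H] [InnerProductSpace ℝ H]
    {C : Set H} {P : H → H}
    (hP : ∀ x, P x ∈ C ∧ ∀ y ∈ C, ‖x - P x‖ ≤ ‖x - y‖) (x : H) :
    Metric.infDist x C = ‖x - P x‖ := by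
  haveI : Nonempty C := ⟨⟨P x, (hP x).1⟩⟩
  apply le_antisymm
  · have := Metric.infDist_le_dist_of_mem (x := x) (hP x).1
    rwa [dist_eq_norm] at this
  · rw [Metric.infDist_eq_iInf]
    apply le_ciInf
    intro w
    rw [dist_eq_norm]
    exact (hP x).2 w w.2

theorem stmt18 {H : Type*} [NormedAddCommGroup H] [InnerProductSpace ℝ H] [CompleteSpace H]
    (C1 C2 : Set H) (h1 : C1.Nonempty) (h2 : C2.Nonempty)
    (hc1 : IsClosed C1) (hc2 : IsClosed C2)
    (hv1 : Convex ℝ C1) (hv2 : Convex ℝ C2)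
    (P1 P2 : H → H)
    (hP1 : ∀ x, P1 x ∈ C1 ∧ ∀ y ∈ C1, ‖x - P1 x‖ ≤ ‖x - y‖)
    (hP2 : ∀ x, P2 x ∈ C2 ∧ ∀ y ∈ C2, ‖x - P2 x‖ ≤ ‖x - y‖)
    (z : H)
    (hz : ∀ w : H, Metric.infDist z C1 ^ 2 + Metric.infDist z C2 ^ 2
      ≤ Metric.infDist w C1 ^ 2 + Metric.infDist w C2 ^ 2) :
    z = (2:ℝ)⁻¹ • (P1 z + P2 z) ∧
    (∀ ε ∈ Set.Ioo (0:ℝ) 1,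
      (fun p => p + ε • (P2 p - p))
          ((fun p => p + ε • (P1 p - p)) ((2 - ε)⁻¹ • ((1 - ε) • P1 z + P2 z)))
        = (2 - ε)⁻¹ • ((1 - ε) • P1 z + P2 z) ∧
      ‖z - (2 - ε)⁻¹ • ((1 - ε) • P1 z + P2 z)‖
        = ε * ‖P2 z - P1 z‖ / (2 * (2 - ε))) ∧
    Tendsto (fun ε : ℝ => ε * ‖P2 z - P1 z‖ / (2 * (2 - ε)))
      (𝓝[Set.Ioo (0:ℝ) 1] 0) (𝓝 0) := by
  set a := P1 z with ha
  set b := P2 z with hb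
  have hd1 : Metric.infDist z C1 = ‖z - a‖ := aux_infDist_eq hP1 z
  have hd2 : Metric.infDist z C2 = ‖z - b‖ := aux_infDist_eq hP2 z
  -- first part : z is the midpoint
  have hmid : z = (2:ℝ)⁻¹ • (a + b) := by
    set m := (2:ℝ)⁻¹ • (a + b) with hm
    have key := hz m
    rw [hd1, hd2] at key
    have hma : Metric.infDist m C1 ≤ ‖m - a‖ := by
      have := Metric.infDist_le_dist_of_mem (x := m) (hP1 z).1
      rwa [dist_eq_norm] at this
    have hmb : Metric.infDist m C2 ≤ ‖m - b‖ := by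
      have := Metric.infDist_le_dist_of_mem (x := m) (hP2 z).1
      rwa [dist_eq_norm] at this
    have hma' : ‖m - a‖ = (2:ℝ)⁻¹ * ‖b - a‖ := by
      have e : m - a = (2:ℝ)⁻¹ • (b - a) := by rw [hm]; module
      rw [e, norm_smul, Real.norm_eq_abs, abs_of_pos] <;> norm_num
    have hmb' : ‖m - b‖ = (2:ℝ)⁻¹ * ‖b - a‖ := by
      have e : m - b = (-(2:ℝ)⁻¹) • (b - a) := by rw [hm]; module
      rw [e, norm_smul, Real.norm_eq_abs, abs_neg, abs_of_pos] <;> norm_num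
    have hnn1 := Metric.infDist_nonneg (s := C1) (x := m)
    have hnn2 := Metric.infDist_nonneg (s := C2) (x := m)
    have hpar := parallelogram_law_with_norm ℝ (z - a) (z - b)
    have e1 : (z - a) + (z - b) = (2:ℝ) • (z - m) := by rw [hm]; module
    have e2 : (z - a) - (z - b) = b - a := by abel
    rw [e1, e2, norm_smul] at hpar
    have habs : ‖(2:ℝ)‖ = 2 := by rw [Real.norm_eq_abs, abs_of_pos] <;> norm_num
    rw [habs] at hpar
    have hzm : ‖z - m‖ ≤ 0 := by
      nlinarith [norm_nonneg (z - m), norm_nonneg (b - a),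
        mul_self_nonneg (Metric.infDist m C1 - ‖m - a‖),
        mul_self_nonneg (Metric.infDist m C2 - ‖m - b‖)]
    have h0 : ‖z - m‖ = 0 := le_antisymm hzm (norm_nonneg _)
    have := norm_eq_zero.mp h0
    rwa [sub_eq_zero] at this
  refine ⟨hmid, ?_, ?_⟩
  · -- fixed point and distance formula
    intro ε hε
    obtain ⟨hε0, hε1⟩ := hε
    have h2ε : (0:ℝ) < 2 - ε := by linarith
    have h2ε' : (2:ℝ) - ε ≠ 0 := ne_of_gt h2ε
    -- inner conditions
    have hI1 : ∀ c ∈ C1, inner ℝ (b - a) (c - a) ≤ (0:ℝ) := by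
      intro c hc
      have h := aux_proj_inner hv1 hP1 z c hc
      rw [← ha] at h
      have hza : z - a = (2:ℝ)⁻¹ • (b - a) := by rw [hmid]; module
      rw [hza, real_inner_smul_left] at h
      nlinarith [h]
    have hI2 : ∀ c ∈ C2, inner ℝ (a - b) (c - b) ≤ (0:ℝ) := by
      intro c hc
      have h := aux_proj_inner hv2 hP2 z c hc
      rw [← hb] at h
      have hzb : z - b = (2:ℝ)⁻¹ • (a - b) := by rw [hmid]; module
      rw [hzb, real_inner_smul_left] at h
      nlinarith [h]
    set zε := (2 - ε)⁻¹ • ((1 - ε) • a + b) with hzε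
    have hPa : P1 zε = a := by
      apply aux_proj_unique hv1 hP1 zε a (hP1 z).1
      intro c hc
      have hza : zε - a = (2 - ε)⁻¹ • (b - a) := by
        rw [hzε]; match_scalars <;> field_simp <;> ring
      rw [hza, real_inner_smul_left]
      have := hI1 c hc
      have hpos : (0:ℝ) < (2 - ε)⁻¹ := inv_pos.mpr h2ε
      nlinarith
    have hPb : P2 (zε + ε • (a - zε)) = b := by
      apply aux_proj_unique hv2 hP2 _ b (hP2 z).1
      intro c hc
      have hyb : (zε + ε • (a - zε)) - b = (2 - ε)⁻¹ • (a - b) := by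
        rw [hzε]; match_scalars <;> field_simp <;> ring
      rw [hyb, real_inner_smul_left]
      have := hI2 c hc
      have hpos : (0:ℝ) < (2 - ε)⁻¹ := inv_pos.mpr h2ε
      nlinarith
    constructor
    · show (zε + ε • (P1 zε - zε)) + ε • (P2 (zε + ε • (P1 zε - zε)) - (zε + ε • (P1 zε - zε))) = zε
      rw [hPa, hPb]
      rw [hzε]; match_scalars <;> field_simp <;> ring
    · have hzz : z - zε = (ε / (2 * (2 - ε))) • (a - b) := by
        rw [hmid, hzε]; match_scalars <;> field_simp <;> ring
      rw [hzz, norm_smul, norm_sub_rev, Real.norm_eq_abs, abs_of_pos (by positivity)]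
      ring
  · have hc : ContinuousAt (fun ε : ℝ => ε * ‖b - a‖ / (2 * (2 - ε))) 0 := by
      apply ContinuousAt.div (by fun_prop) (by fun_prop)
      norm_num
    have ht := hc.tendsto
    have h0 : (0:ℝ) * ‖b - a‖ / (2 * (2 - 0)) = 0 := by norm_num
    rw [h0] at ht
    exact ht.mono_left nhdsWithin_le_nhds
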